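/- arXiv:2412.13372 — 2 statements merged into one kernel-verified Lean document; each statement's English description precedes it below -/
import Mathlib

section
/- The Motzkin polynomial x₁⁴x₂² + x₁²x₂⁴ - 3x₁²x₂² + 1 is not a sum of squares of real polynomials in x₁, x₂. -/
open MvPolynomial

namespace MotzkinAux

open Finsupp Finset

noncomputable def mm (a b : ℕ) : Fin 2 →₀ ℕ :=
  Finsupp.single 0 a + Finsupp.single 1 b

@[simp] lemma mm_apply0 (a b : ℕ) : mm a b 0 = a := by simp [mm]
@[simp] lemma mm_apply1 (a b : ℕ) : mm a b 1 = b := by simp [mm, Finsupp.single_apply]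

lemma mm_eq_self (d : Fin 2 →₀ ℕ) : d = mm (d 0) (d 1) := by
  ext x; fin_cases x <;> simp

lemma mm_inj {a b c d : ℕ} : mm a b = mm c d ↔ a = c ∧ b = d := by
  constructor
  · intro h
    exact ⟨by simpa using DFunLike.congr_fun h 0, by simpa using DFunLike.congr_fun h 1⟩
  · rintro ⟨rfl, rfl⟩; rfl

lemma mm_add (a b c d : ℕ) : mm a b + mm c d = mm (a + c) (b + d) := by
  ext x; fin_cases x <;> simp

lemma mm_degree (a b : ℕ) : (mm a b).degree = a + b := by
  have : (mm a b).degree = ∑ i : Fin 2, mm a b i := by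
    rw [Finsupp.degree]
    exact Finset.sum_subset (Finset.subset_univ _)
      (fun x _ hx => Finsupp.notMem_support_iff.mp hx)
  rw [this, Fin.sum_univ_two, mm_apply0, mm_apply1]

@[simp] lemma mm_zero : mm 0 0 = 0 := by ext x; fin_cases x <;> simp

lemma degree_add' (u v : Fin 2 →₀ ℕ) : (u + v).degree = u.degree + v.degree := by
  rw [Finsupp.degree_eq_weight_one]; exact map_add _ u v

lemma coeff_zero_of_lt {f : MvPolynomial (Fin 2) ℝ} {u : Fin 2 →₀ ℕ}
    (h : f.totalDegree < u.degree) : coeff u f = 0 :=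
  coeff_eq_zero_of_totalDegree_lt h

lemma coeff_big {f : MvPolynomial (Fin 2) ℝ} (hf : f.totalDegree ≤ 3) {a b : ℕ}
    (h4 : 4 ≤ a + b) : coeff (mm a b) f = 0 :=
  coeff_zero_of_lt (by rw [mm_degree]; omega)

lemma homComp_mul_top {f g : MvPolynomial (Fin 2) ℝ} {a b : ℕ}
    (hf : f.totalDegree ≤ a) (hg : g.totalDegree ≤ b) :
    homogeneousComponent (a + b) (f * g)
      = homogeneousComponent a f * homogeneousComponent b g := by
  apply MvPolynomial.ext
  intro d
  rw [coeff_homogeneousComponent, coeff_mul, coeff_mul]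
  simp_rw [coeff_homogeneousComponent]
  by_cases hd : d.degree = a + b
  · rw [if_pos hd]
    apply Finset.sum_congr rfl
    rintro ⟨u, v⟩ hx
    rw [Finset.HasAntidiagonal.mem_antidiagonal] at hx
    have hadd : u.degree + v.degree = a + b := by rw [← degree_add', hx, hd]
    by_cases hu : u.degree = a
    · have hv : v.degree = b := by omega
      rw [if_pos hu, if_pos hv]
    · rw [if_neg hu]
      rcases lt_or_gt_of_ne hu with h1 | h1
      · have hv : b < v.degree := by omega
        rw [coeff_zero_of_lt (lt_of_le_of_lt hg hv), mul_zero, zero_mul]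
      · rw [coeff_zero_of_lt (lt_of_le_of_lt hf h1), zero_mul, zero_mul]
  · rw [if_neg hd]
    symm
    apply Finset.sum_eq_zero
    rintro ⟨u, v⟩ hx
    rw [Finset.HasAntidiagonal.mem_antidiagonal] at hx
    by_cases hu : u.degree = a
    · by_cases hv : v.degree = b
      · exact absurd (by rw [← hx, degree_add', hu, hv]) hd
      · rw [if_neg hv, mul_zero]
    · rw [if_neg hu, zero_mul]

lemma sos_deg_le {n m : ℕ} (q : Fin m → MvPolynomial (Fin 2) ℝ)
    {P : MvPolynomial (Fin 2) ℝ} (hP : P = ∑ i, q i ^ 2)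
    (hPd : P.totalDegree ≤ n + n) : ∀ i, (q i).totalDegree ≤ n := by
  by_contra hcon
  push_neg at hcon
  obtain ⟨i₀, hi₀⟩ := hcon
  set D := Finset.univ.sup (fun i => (q i).totalDegree) with hDdef
  have hD : n < D := lt_of_lt_of_le hi₀
    (Finset.le_sup (f := fun i => (q i).totalDegree) (Finset.mem_univ i₀))
  have hle : ∀ i, (q i).totalDegree ≤ D :=
    fun i => Finset.le_sup (f := fun i => (q i).totalDegree) (Finset.mem_univ i)
  obtain ⟨i₁, -, hi₁⟩ := Finset.exists_mem_eq_sup Finset.univ ⟨i₀, Finset.mem_univ i₀⟩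
    (fun i => (q i).totalDegree)
  have hcomp : ∀ i, homogeneousComponent (D + D) (q i ^ 2)
      = (homogeneousComponent D (q i)) ^ 2 := by
    intro i
    rw [sq, sq]
    exact homComp_mul_top (hle i) (hle i)
  have hzero : homogeneousComponent (D + D) P = 0 :=
    homogeneousComponent_eq_zero _ _ (lt_of_le_of_lt hPd (Nat.add_lt_add hD hD))
  have hsum : ∑ i, (homogeneousComponent D (q i)) ^ 2 = 0 := by
    rw [← Finset.sum_congr rfl (fun i _ => hcomp i), ← map_sum, ← hP, hzero]
  have hF : homogeneousComponent D (q i₁) = 0 := by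
    apply MvPolynomial.funext
    intro x
    have h0 : ∑ i, (eval x (homogeneousComponent D (q i))) ^ 2 = 0 := by
      have := congrArg (eval x) hsum
      simpa [map_sum] using this
    have := (Finset.sum_eq_zero_iff_of_nonneg (fun i _ => sq_nonneg _)).mp h0 i₁
      (Finset.mem_univ i₁)
    simpa [sq_eq_zero_iff] using this
  have hne : q i₁ ≠ 0 := by
    intro h0
    rw [h0, totalDegree_zero] at hi₁
    omega
  obtain ⟨d, hd, hdd⟩ := Finset.exists_mem_eq_sup (q i₁).support
    (Finset.nonempty_iff_ne_empty.mpr (by rwa [Ne, MvPolynomial.support_eq_empty])) (fun s => s.sum fun _ e => e)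
  have hdeg : d.degree = D := by
    rw [hDdef, hi₁]
    exact hdd.symm
  have : coeff d (homogeneousComponent D (q i₁)) = coeff d (q i₁) := by
    rw [coeff_homogeneousComponent, if_pos hdeg]
  rw [hF] at this
  exact (MvPolynomial.mem_support_iff.mp hd) this.symm

lemma csq (f : MvPolynomial (Fin 2) ℝ) (u₀ : Fin 2 →₀ ℕ)
    (H : ∀ u v : Fin 2 →₀ ℕ, u + v = u₀ + u₀ → (u, v) ≠ (u₀, u₀) →
      coeff u f * coeff v f = 0) :
    coeff (u₀ + u₀) (f ^ 2) = coeff u₀ f ^ 2 := by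
  rw [sq, coeff_mul]
  refine (Finset.sum_eq_single_of_mem (u₀, u₀) (Finset.HasAntidiagonal.mem_antidiagonal.mpr rfl) ?_).trans
    (pow_two _).symm
  rintro ⟨u, v⟩ hmem hne
  exact H u v (Finset.HasAntidiagonal.mem_antidiagonal.mp hmem) hne

lemma c60 {f : MvPolynomial (Fin 2) ℝ} (hf : f.totalDegree ≤ 3) :
    coeff (mm 6 0) (f ^ 2) = coeff (mm 3 0) f ^ 2 := by
  have := csq f (mm 3 0) ?_
  · rwa [mm_add] at this
  rintro u v huv hne
  rw [mm_add] at huv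
  obtain ⟨x, y, z, w, rfl, rfl⟩ : ∃ x y z w, u = mm x y ∧ v = mm z w :=
    ⟨u 0, u 1, v 0, v 1, mm_eq_self u, mm_eq_self v⟩
  rw [mm_add, mm_inj] at huv
  rw [Ne, Prod.ext_iff, mm_inj, mm_inj] at hne
  obtain ⟨h0, h1⟩ := huv
  have hy : y = 0 := by omega
  have hw : w = 0 := by omega
  subst hy hw
  rcases Nat.lt_or_ge x 3 with hx | hx
  · rw [coeff_big hf (a := z) (b := 0) (by omega), mul_zero]
  · rcases Nat.lt_or_ge x 4 with hx4 | hx4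
    · exfalso
      apply hne
      constructor <;> omega
    · rw [coeff_big hf (a := x) (b := 0) (by omega), zero_mul]

lemma c06 {f : MvPolynomial (Fin 2) ℝ} (hf : f.totalDegree ≤ 3) :
    coeff (mm 0 6) (f ^ 2) = coeff (mm 0 3) f ^ 2 := by
  have := csq f (mm 0 3) ?_
  · rwa [mm_add] at this
  rintro u v huv hne
  rw [mm_add] at huv
  obtain ⟨x, y, z, w, rfl, rfl⟩ : ∃ x y z w, u = mm x y ∧ v = mm z w :=
    ⟨u 0, u 1, v 0, v 1, mm_eq_self u, mm_eq_self v⟩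
  rw [mm_add, mm_inj] at huv
  rw [Ne, Prod.ext_iff, mm_inj, mm_inj] at hne
  obtain ⟨h0, h1⟩ := huv
  have hy : x = 0 := by omega
  have hw : z = 0 := by omega
  subst hy hw
  rcases Nat.lt_or_ge y 3 with hx | hx
  · rw [coeff_big hf (a := 0) (b := w) (by omega), mul_zero]
  · rcases Nat.lt_or_ge y 4 with hx4 | hx4
    · exfalso
      apply hne
      constructor <;> omega
    · rw [coeff_big hf (a := 0) (b := y) (by omega), zero_mul]

lemma c40 {f : MvPolynomial (Fin 2) ℝ} (hf : f.totalDegree ≤ 3)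
    (h30 : coeff (mm 3 0) f = 0) :
    coeff (mm 4 0) (f ^ 2) = coeff (mm 2 0) f ^ 2 := by
  have := csq f (mm 2 0) ?_
  · rwa [mm_add] at this
  rintro u v huv hne
  rw [mm_add] at huv
  obtain ⟨x, y, z, w, rfl, rfl⟩ : ∃ x y z w, u = mm x y ∧ v = mm z w :=
    ⟨u 0, u 1, v 0, v 1, mm_eq_self u, mm_eq_self v⟩
  rw [mm_add, mm_inj] at huv
  rw [Ne, Prod.ext_iff, mm_inj, mm_inj] at hne
  obtain ⟨h0, h1⟩ := huv
  have hy : y = 0 := by omega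
  have hw : w = 0 := by omega
  subst hy hw
  have hx4 : x ≤ 4 := by omega
  interval_cases x
  · rw [coeff_big hf (a := z) (b := 0) (by omega), mul_zero]
  · have hz : z = 3 := by omega
    rw [hz, h30, mul_zero]
  · exact absurd (by constructor <;> omega) hne
  · rw [h30, zero_mul]
  · rw [coeff_big hf (a := 4) (b := 0) (by omega), zero_mul]

lemma c04 {f : MvPolynomial (Fin 2) ℝ} (hf : f.totalDegree ≤ 3)
    (h30 : coeff (mm 0 3) f = 0) :
    coeff (mm 0 4) (f ^ 2) = coeff (mm 0 2) f ^ 2 := by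
  have := csq f (mm 0 2) ?_
  · rwa [mm_add] at this
  rintro u v huv hne
  rw [mm_add] at huv
  obtain ⟨x, y, z, w, rfl, rfl⟩ : ∃ x y z w, u = mm x y ∧ v = mm z w :=
    ⟨u 0, u 1, v 0, v 1, mm_eq_self u, mm_eq_self v⟩
  rw [mm_add, mm_inj] at huv
  rw [Ne, Prod.ext_iff, mm_inj, mm_inj] at hne
  obtain ⟨h0, h1⟩ := huv
  have hy : x = 0 := by omega
  have hw : z = 0 := by omega
  subst hy hw
  have hx4 : y ≤ 4 := by omega
  interval_cases y
  · rw [coeff_big hf (a := 0) (b := w) (by omega), mul_zero]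
  · have hz : w = 3 := by omega
    rw [hz, h30, mul_zero]
  · exact absurd (by constructor <;> omega) hne
  · rw [h30, zero_mul]
  · rw [coeff_big hf (a := 0) (b := 4) (by omega), zero_mul]

lemma c20 {f : MvPolynomial (Fin 2) ℝ} (h20 : coeff (mm 2 0) f = 0) :
    coeff (mm 2 0) (f ^ 2) = coeff (mm 1 0) f ^ 2 := by
  have := csq f (mm 1 0) ?_
  · rwa [mm_add] at this
  rintro u v huv hne
  rw [mm_add] at huv
  obtain ⟨x, y, z, w, rfl, rfl⟩ : ∃ x y z w, u = mm x y ∧ v = mm z w :=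
    ⟨u 0, u 1, v 0, v 1, mm_eq_self u, mm_eq_self v⟩
  rw [mm_add, mm_inj] at huv
  rw [Ne, Prod.ext_iff, mm_inj, mm_inj] at hne
  obtain ⟨h0, h1⟩ := huv
  have hy : y = 0 := by omega
  have hw : w = 0 := by omega
  subst hy hw
  have hx2 : x ≤ 2 := by omega
  interval_cases x
  · have hz : z = 2 := by omega
    rw [hz, h20, mul_zero]
  · exact absurd (by constructor <;> omega) hne
  · rw [h20, zero_mul]

lemma c02 {f : MvPolynomial (Fin 2) ℝ} (h20 : coeff (mm 0 2) f = 0) :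
    coeff (mm 0 2) (f ^ 2) = coeff (mm 0 1) f ^ 2 := by
  have := csq f (mm 0 1) ?_
  · rwa [mm_add] at this
  rintro u v huv hne
  rw [mm_add] at huv
  obtain ⟨x, y, z, w, rfl, rfl⟩ : ∃ x y z w, u = mm x y ∧ v = mm z w :=
    ⟨u 0, u 1, v 0, v 1, mm_eq_self u, mm_eq_self v⟩
  rw [mm_add, mm_inj] at huv
  rw [Ne, Prod.ext_iff, mm_inj, mm_inj] at hne
  obtain ⟨h0, h1⟩ := huv
  have hy : x = 0 := by omega
  have hw : z = 0 := by omega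
  subst hy hw
  have hx2 : y ≤ 2 := by omega
  interval_cases y
  · have hz : w = 2 := by omega
    rw [hz, h20, mul_zero]
  · exact absurd (by constructor <;> omega) hne
  · rw [h20, zero_mul]

lemma c22 {f : MvPolynomial (Fin 2) ℝ} (hf : f.totalDegree ≤ 3)
    (h10 : coeff (mm 1 0) f = 0) (h01 : coeff (mm 0 1) f = 0)
    (h20 : coeff (mm 2 0) f = 0) (h02 : coeff (mm 0 2) f = 0) :
    coeff (mm 2 2) (f ^ 2) = coeff (mm 1 1) f ^ 2 := by
  have := csq f (mm 1 1) ?_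
  · rwa [mm_add] at this
  rintro u v huv hne
  rw [mm_add] at huv
  obtain ⟨x, y, z, w, rfl, rfl⟩ : ∃ x y z w, u = mm x y ∧ v = mm z w :=
    ⟨u 0, u 1, v 0, v 1, mm_eq_self u, mm_eq_self v⟩
  rw [mm_add, mm_inj] at huv
  rw [Ne, Prod.ext_iff, mm_inj, mm_inj] at hne
  obtain ⟨h0, h1⟩ := huv
  have hx2 : x ≤ 2 := by omega
  have hy2 : y ≤ 2 := by omega
  interval_cases x <;> interval_cases y
  · rw [coeff_big hf (a := z) (b := w) (by omega), mul_zero]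
  · rw [h01, zero_mul]
  · rw [h02, zero_mul]
  · rw [h10, zero_mul]
  · exact absurd (by constructor <;> omega) hne
  · have hz : z = 1 := by omega
    have hw : w = 0 := by omega
    rw [hz, hw, h10, mul_zero]
  · rw [h20, zero_mul]
  · have hz : z = 0 := by omega
    have hw : w = 1 := by omega
    rw [hz, hw, h01, mul_zero]
  · rw [coeff_big hf (a := 2) (b := 2) (by omega), zero_mul]

lemma P_eq : ((X 0)^4 * (X 1)^2 + (X 0)^2 * (X 1)^4 - C 3 * (X 0)^2 * (X 1)^2 + 1 :
      MvPolynomial (Fin 2) ℝ)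
    = monomial (mm 4 2) 1 + monomial (mm 2 4) 1 + monomial (mm 2 2) (-3)
      + monomial (mm 0 0) 1 := by
  rw [sub_eq_add_neg]
  simp only [X_pow_eq_monomial, monomial_mul, mul_one, one_mul, C_mul_monomial]
  rw [← map_neg]
  rw [mm_zero, monomial_zero']
  norm_num
  rfl

lemma tdm (a b : ℕ) (c : ℝ) : (monomial (mm a b) c).totalDegree ≤ a + b := by
  refine (totalDegree_monomial_le _ _).trans ?_
  have h : ((mm a b).sum fun _ => id) = (mm a b).degree := rfl
  rw [h, mm_degree]

end MotzkinAux

open MotzkinAux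

theorem motzkin_not_sos :
    ¬ ∃ (m : ℕ) (q : Fin m → MvPolynomial (Fin 2) ℝ),
      (X 0)^4 * (X 1)^2 + (X 0)^2 * (X 1)^4 - C 3 * (X 0)^2 * (X 1)^2 + 1
        = ∑ i, (q i)^2 := by
  rintro ⟨m, q, h⟩
  rw [P_eq] at h
  set P : MvPolynomial (Fin 2) ℝ := monomial (mm 4 2) 1 + monomial (mm 2 4) 1
    + monomial (mm 2 2) (-3) + monomial (mm 0 0) 1 with hPdef
  have hPd : P.totalDegree ≤ 3 + 3 := by
    refine (totalDegree_add _ _).trans (max_le ((totalDegree_add _ _).trans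
      (max_le ((totalDegree_add _ _).trans (max_le ?_ ?_)) ?_)) ?_) <;>
      exact (tdm _ _ _).trans (by norm_num)
  have hdeg : ∀ i, (q i).totalDegree ≤ 3 := sos_deg_le q h hPd
  have hcoeffP : ∀ a b : ℕ, coeff (mm a b) P =
      (if a = 4 ∧ b = 2 then (1:ℝ) else 0) + (if a = 2 ∧ b = 4 then 1 else 0)
      + (if a = 2 ∧ b = 2 then -3 else 0) + (if a = 0 ∧ b = 0 then 1 else 0) := by
    intro a b
    rw [hPdef]
    simp only [coeff_add, coeff_monomial, mm_inj]
    congr 1 <;> [skip; simp [eq_comm, and_comm]]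
    congr 1 <;> [skip; simp [eq_comm, and_comm]]
    congr 1 <;> simp [eq_comm, and_comm]
  -- sum-of-squares coefficient identities
  have hsq : ∀ a b : ℕ, coeff (mm a b) P = ∑ i, coeff (mm a b) (q i ^ 2) := by
    intro a b
    rw [h, MvPolynomial.coeff_sum]
  -- step: a(3,0) = 0
  have h30 : ∀ i, coeff (mm 3 0) (q i) = 0 := by
    have h0 : ∑ i, coeff (mm 3 0) (q i) ^ 2 = 0 := by
      rw [← Finset.sum_congr rfl (fun i _ => c60 (hdeg i)), ← hsq 6 0, hcoeffP]
      norm_num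
    intro i
    have := (Finset.sum_eq_zero_iff_of_nonneg (fun i _ => sq_nonneg _)).mp h0 i
      (Finset.mem_univ i)
    exact pow_eq_zero_iff (two_ne_zero) |>.mp this
  have h03 : ∀ i, coeff (mm 0 3) (q i) = 0 := by
    have h0 : ∑ i, coeff (mm 0 3) (q i) ^ 2 = 0 := by
      rw [← Finset.sum_congr rfl (fun i _ => c06 (hdeg i)), ← hsq 0 6, hcoeffP]
      norm_num
    intro i
    have := (Finset.sum_eq_zero_iff_of_nonneg (fun i _ => sq_nonneg _)).mp h0 i
      (Finset.mem_univ i)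
    exact pow_eq_zero_iff (two_ne_zero) |>.mp this
  have h20 : ∀ i, coeff (mm 2 0) (q i) = 0 := by
    have h0 : ∑ i, coeff (mm 2 0) (q i) ^ 2 = 0 := by
      rw [← Finset.sum_congr rfl (fun i _ => c40 (hdeg i) (h30 i)), ← hsq 4 0, hcoeffP]
      norm_num
    intro i
    have := (Finset.sum_eq_zero_iff_of_nonneg (fun i _ => sq_nonneg _)).mp h0 i
      (Finset.mem_univ i)
    exact pow_eq_zero_iff (two_ne_zero) |>.mp this
  have h02 : ∀ i, coeff (mm 0 2) (q i) = 0 := by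
    have h0 : ∑ i, coeff (mm 0 2) (q i) ^ 2 = 0 := by
      rw [← Finset.sum_congr rfl (fun i _ => c04 (hdeg i) (h03 i)), ← hsq 0 4, hcoeffP]
      norm_num
    intro i
    have := (Finset.sum_eq_zero_iff_of_nonneg (fun i _ => sq_nonneg _)).mp h0 i
      (Finset.mem_univ i)
    exact pow_eq_zero_iff (two_ne_zero) |>.mp this
  have h10 : ∀ i, coeff (mm 1 0) (q i) = 0 := by
    have h0 : ∑ i, coeff (mm 1 0) (q i) ^ 2 = 0 := by
      rw [← Finset.sum_congr rfl (fun i _ => c20 (h20 i)), ← hsq 2 0, hcoeffP]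
      norm_num
    intro i
    have := (Finset.sum_eq_zero_iff_of_nonneg (fun i _ => sq_nonneg _)).mp h0 i
      (Finset.mem_univ i)
    exact pow_eq_zero_iff (two_ne_zero) |>.mp this
  have h01 : ∀ i, coeff (mm 0 1) (q i) = 0 := by
    have h0 : ∑ i, coeff (mm 0 1) (q i) ^ 2 = 0 := by
      rw [← Finset.sum_congr rfl (fun i _ => c02 (h02 i)), ← hsq 0 2, hcoeffP]
      norm_num
    intro i
    have := (Finset.sum_eq_zero_iff_of_nonneg (fun i _ => sq_nonneg _)).mp h0 i
      (Finset.mem_univ i)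
    exact pow_eq_zero_iff (two_ne_zero) |>.mp this
  -- final contradiction
  have hfinal : (-3 : ℝ) = ∑ i, coeff (mm 1 1) (q i) ^ 2 := by
    rw [← Finset.sum_congr rfl
      (fun i _ => c22 (hdeg i) (h10 i) (h01 i) (h20 i) (h02 i)), ← hsq 2 2, hcoeffP]
    norm_num
  have : (0:ℝ) ≤ ∑ i, coeff (mm 1 1) (q i) ^ 2 :=
    Finset.sum_nonneg (fun i _ => sq_nonneg _)
  rw [← hfinal] at this
  norm_num at this
end

section
/- Sylvester's criterion for positive semidefiniteness: a real symmetric n×n matrix is positive semidefinite if and only if all of its principal minors (determinants of submatrices obtained by selecting the same subset of rows and columns) are nonnegative. -/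
open Matrix Finset

/-- det of the matrix whose rows in `S` come from `A` and whose other rows come from the
identity matrix equals the principal minor of `A` on `S`. -/
lemma det_piecewise_one {n : ℕ} (A : Matrix (Fin n) (Fin n) ℝ) (S : Finset (Fin n)) :
    Matrix.det (Matrix.of (S.piecewise (fun i => A i) (fun i => (1 : Matrix (Fin n) (Fin n) ℝ) i))) =
      (A.submatrix (fun i : S => (i : Fin n)) (fun i : S => (i : Fin n))).det := by
  classical
  let e : {x : Fin n // x ∈ S} ⊕ {x : Fin n // x ∉ S} ≃ Fin n := Equiv.sumCompl (· ∈ S)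
  rw [← Matrix.det_submatrix_equiv_self e]
  have hM : (Matrix.of (S.piecewise (fun i => A i)
        (fun i => (1 : Matrix (Fin n) (Fin n) ℝ) i))).submatrix e e =
      Matrix.fromBlocks
        (A.submatrix (fun i : S => (i : Fin n)) (fun i : S => (i : Fin n)))
        (A.submatrix (fun i : S => (i : Fin n)) (fun i : {x : Fin n // x ∉ S} => (i : Fin n)))
        0 1 := by
    ext i j
    rcases i with i | i <;> rcases j with j | j <;>
      simp only [Matrix.submatrix_apply, Matrix.of_apply, Finset.piecewise, e,
        Equiv.sumCompl_apply_inl, Equiv.sumCompl_apply_inr, Matrix.fromBlocks_apply₁₁,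
        Matrix.fromBlocks_apply₁₂, Matrix.fromBlocks_apply₂₁, Matrix.fromBlocks_apply₂₂,
        Matrix.zero_apply]
    · rw [if_pos i.2]
    · rw [if_pos i.2]
    · have hne : (i : Fin n) ≠ (j : Fin n) := fun h => i.2 (by rw [h]; exact j.2)
      rw [if_neg i.2, Matrix.one_apply_ne hne]
    · rw [if_neg i.2]
      simp [Matrix.one_apply, Subtype.ext_iff]
  rw [hM, Matrix.det_fromBlocks_zero₂₁, Matrix.det_one, mul_one]

/-- Expansion of `det (A + t • 1)` as a sum over principal minors. -/
lemma det_add_smul_one {n : ℕ} (A : Matrix (Fin n) (Fin n) ℝ) (t : ℝ) :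
    (A + t • (1 : Matrix (Fin n) (Fin n) ℝ)).det =
      ∑ S : Finset (Fin n), t ^ (n - S.card) *
        (A.submatrix (fun i : S => (i : Fin n)) (fun i : S => (i : Fin n))).det := by
  classical
  have h := (Matrix.detRowAlternating :
      AlternatingMap ℝ (Fin n → ℝ) ℝ (Fin n)).toMultilinearMap.map_add_univ
    (fun i => A i) (fun i => (t • (1 : Matrix (Fin n) (Fin n) ℝ)) i)
  have h2 : (A + t • (1 : Matrix (Fin n) (Fin n) ℝ)).det =
      ∑ s : Finset (Fin n),
        (Matrix.detRowAlternating : AlternatingMap ℝ (Fin n → ℝ) ℝ (Fin n))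
          (s.piecewise (fun i => A i) fun i => (t • (1 : Matrix (Fin n) (Fin n) ℝ)) i) := h
  rw [h2]
  refine Finset.sum_congr rfl fun S _ => ?_
  have hre : S.piecewise (fun i => A i) (fun i => (t • (1 : Matrix (Fin n) (Fin n) ℝ)) i) =
      Sᶜ.piecewise (fun i => t • (S.piecewise (fun i => A i)
          (fun i => (1 : Matrix (Fin n) (Fin n) ℝ) i)) i)
        (S.piecewise (fun i => A i) (fun i => (1 : Matrix (Fin n) (Fin n) ℝ) i)) := by
    funext i
    by_cases hi : i ∈ S
    · simp [Finset.piecewise, hi]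
    · simp only [Finset.piecewise, hi, if_neg, Finset.mem_compl, not_false_iff, if_pos,
        if_true]
      rfl
  rw [hre]
  have := (Matrix.detRowAlternating :
      AlternatingMap ℝ (Fin n → ℝ) ℝ (Fin n)).toMultilinearMap.map_piecewise_smul
    (fun _ => t)
    (S.piecewise (fun i => A i) (fun i => (1 : Matrix (Fin n) (Fin n) ℝ) i)) Sᶜ
  refine this.trans ?_
  rw [Finset.prod_const, Finset.card_compl, Fintype.card_fin, smul_eq_mul]
  congr 1
  exact det_piecewise_one A S

theorem sylvester_psd {n : ℕ} (A : Matrix (Fin n) (Fin n) ℝ) (hA : A.IsSymm) :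
    A.PosSemidef ↔
      ∀ S : Finset (Fin n),
        0 ≤ (A.submatrix (fun i : S => (i : Fin n)) (fun i : S => (i : Fin n))).det := by
  classical
  constructor
  · intro hpsd S
    have hsub : (A.submatrix (fun i : S => (i : Fin n)) (fun i : S => (i : Fin n))).PosSemidef :=
      hpsd.submatrix _
    have hdet := hsub.isHermitian.det_eq_prod_eigenvalues
    rw [hdet]
    exact Finset.prod_nonneg fun i _ => hsub.eigenvalues_nonneg i
  · intro h
    have hH : A.IsHermitian := by
      rw [Matrix.IsHermitian, Matrix.conjTranspose_eq_transpose_of_trivial]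
      exact hA
    apply hH.posSemidef_iff_eigenvalues_nonneg.mpr
    intro i
    by_contra hlt
    push_neg at hlt
    set t : ℝ := -hH.eigenvalues i with ht
    have htpos : 0 < t := by simp [ht]; linarith [show (0 : Fin n → ℝ) i = 0 from rfl]
    -- det (A + t • 1) = 0 since -t is an eigenvalue
    have hdet0 : (A + t • (1 : Matrix (Fin n) (Fin n) ℝ)).det = 0 := by
      rw [← Matrix.exists_mulVec_eq_zero_iff]
      refine ⟨fun j => hH.eigenvectorBasis i j, ?_, ?_⟩
      · intro hv
        exact hH.eigenvectorBasis.toBasis.ne_zero i (by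
          ext j
          exact congrFun hv j)
      · have hmv : A *ᵥ (fun j => hH.eigenvectorBasis i j) =
            hH.eigenvalues i • fun j => hH.eigenvectorBasis i j :=
          hH.mulVec_eigenvectorBasis i
        have : (A + t • (1 : Matrix (Fin n) (Fin n) ℝ)) *ᵥ (fun j => hH.eigenvectorBasis i j) =
            A *ᵥ (fun j => hH.eigenvectorBasis i j) + t • (fun j => hH.eigenvectorBasis i j) := by
          rw [Matrix.add_mulVec, Matrix.smul_mulVec, Matrix.one_mulVec]
        rw [this, hmv]
        funext j
        simp [ht]
    -- but det (A + t • 1) > 0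
    have hpos : 0 < (A + t • (1 : Matrix (Fin n) (Fin n) ℝ)).det := by
      rw [det_add_smul_one]
      have hmem : (∅ : Finset (Fin n)) ∈ (Finset.univ : Finset (Finset (Fin n))) :=
        Finset.mem_univ _
      refine Finset.sum_pos' (fun S _ => mul_nonneg (pow_nonneg htpos.le _) (h S)) ⟨∅, hmem, ?_⟩
      have : (A.submatrix (fun i : (∅ : Finset (Fin n)) => (i : Fin n))
          (fun i : (∅ : Finset (Fin n)) => (i : Fin n))).det = 1 := by
        haveI : IsEmpty ((∅ : Finset (Fin n)) : Type) := by
          exact ⟨fun x => Finset.notMem_empty _ x.2⟩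
        exact Matrix.det_isEmpty
      rw [this, Finset.card_empty, Nat.sub_zero, mul_one]
      exact pow_pos htpos n
    rw [hdet0] at hpos
    exact lt_irrefl 0 hpos
end
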